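/- Let R be a Prüfer domain and let a and b be finitely generated ideals of R. Then there is an isomorphism of R-modules a × b ≅ (a + b) × (a ∩ b). -/

import Mathlib

/-- Over a Prüfer domain, for finitely generated ideals `a` and `b` there is an
isomorphism of `R`-modules `a × b ≃ (a + b) × (a ∩ b)`. -/
theorem stmt_5 {R : Type*} [CommRing R] [IsDomain R]
    (hpruf : ∀ I : Ideal R, I.FG → I ≠ ⊥ →
      ∃ (J : Ideal R) (c : R), J.FG ∧ c ≠ 0 ∧ I * J = Ideal.span {c})
    (a b : Ideal R) (ha : a.FG) (hb : b.FG) :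
    Nonempty ((↥a × ↥b) ≃ₗ[R] (↥(a + b) × ↥(a ⊓ b))) := by
  rw [Ideal.add_eq_sup]
  by_cases hbot : a ⊔ b = ⊥
  · have ha0 : a = ⊥ := by simpa using (sup_eq_bot_iff.mp hbot).1
    have hb0 : b = ⊥ := by simpa using (sup_eq_bot_iff.mp hbot).2
    exact ⟨LinearEquiv.prodCongr
      (LinearEquiv.ofEq a (a ⊔ b) (by rw [ha0, hb0, sup_idem]))
      (LinearEquiv.ofEq b (a ⊓ b) (by rw [ha0, hb0, inf_idem]))⟩
  obtain ⟨J, c, hJfg, hc, hIJ⟩ := hpruf (a ⊔ b) (Submodule.FG.sup ha hb) hbot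
  -- the maps of the short exact sequence
  set f : ↥(a ⊓ b) →ₗ[R] ↥a × ↥b :=
    LinearMap.prod (Submodule.inclusion inf_le_left)
      (-(Submodule.inclusion inf_le_right)) with hf_def
  set g : ↥a × ↥b →ₗ[R] ↥(a ⊔ b) :=
    LinearMap.coprod (Submodule.inclusion le_sup_left)
      (Submodule.inclusion le_sup_right) with hg_def
  have hgapply : ∀ y : ↥a × ↥b, (g y : R) = (y.1 : R) + (y.2 : R) := fun y => rfl
  have hfinj : Function.Injective f := by
    intro x y hxy
    exact Subtype.ext (congrArg (fun p => ((p.1 : ↥a) : R)) hxy)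
  have hexact : Function.Exact f g := by
    intro y
    constructor
    · intro h0
      have h0' : (y.1 : R) + (y.2 : R) = 0 := by
        rw [← hgapply y, h0]; rfl
      have hmem : (y.1 : R) ∈ a ⊓ b := by
        refine ⟨y.1.2, ?_⟩
        have : (y.1 : R) = -(y.2 : R) := eq_neg_of_add_eq_zero_left h0'
        rw [this]; exact neg_mem y.2.2
      refine ⟨⟨(y.1 : R), hmem⟩, ?_⟩
      have h2 : -(y.1 : R) = (y.2 : R) := by
        have := eq_neg_of_add_eq_zero_left h0'
        rw [this, neg_neg]
      refine Prod.ext (Subtype.ext rfl) (Subtype.ext ?_)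
      simpa [hf_def, Submodule.inclusion] using h2
    · rintro ⟨x, rfl⟩
      apply Subtype.ext
      show ((f x).1 : R) + ((f x).2 : R) = 0
      simp [hf_def, Submodule.inclusion]
  -- decompose c
  have hcmem : c ∈ a * J ⊔ b * J := by
    rw [← Ideal.sup_mul, hIJ]
    exact Ideal.mem_span_singleton_self c
  obtain ⟨u, hu, v, hv, huv⟩ := Submodule.mem_sup.mp hcmem
  have huc : u ∈ Ideal.span {c} := by
    rw [← hIJ]; exact Ideal.mul_mono le_sup_left le_rfl hu
  have hvc : v ∈ Ideal.span {c} := by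
    rw [← hIJ]; exact Ideal.mul_mono le_sup_right le_rfl hv
  -- multiplication by c as a linear equivalence onto its range
  have hcinj : Function.Injective (LinearMap.toSpanSingleton R R c) := by
    intro x y hxy
    have : x * c = y * c := by
      simpa [LinearMap.toSpanSingleton_apply, smul_eq_mul] using hxy
    exact mul_right_cancel₀ hc this
  have hrange : LinearMap.range (LinearMap.toSpanSingleton R R c) = Ideal.span {c} := by
    ext x
    simp [Ideal.mem_span_singleton', LinearMap.toSpanSingleton_apply, smul_eq_mul]
  -- divide-by-c helper
  have key : ∀ (w : R) (I : Ideal R), w ∈ Ideal.span {c} →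
      (∀ x : R, x ∈ a ⊔ b → w * x ∈ Ideal.span {c} * I) →
      ∃ s : ↥(a ⊔ b) →ₗ[R] ↥I, ∀ x : ↥(a ⊔ b), c * (s x : R) = w * (x : R) := by
    intro w I hw hwx
    set e : R ≃ₗ[R] LinearMap.range (LinearMap.toSpanSingleton R R c) :=
      LinearEquiv.ofInjective _ hcinj with he_def
    set m : ↥(a ⊔ b) →ₗ[R] LinearMap.range (LinearMap.toSpanSingleton R R c) :=
      LinearMap.codRestrict _ ((LinearMap.lsmul R R w).comp (Submodule.subtype _))
        (fun x => by
          rw [hrange]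
          exact Ideal.mul_mem_right _ _ hw) with hm_def
    set ψ : ↥(a ⊔ b) →ₗ[R] R := e.symm.toLinearMap.comp m with hψ_def
    have hψ : ∀ x : ↥(a ⊔ b), (ψ x) * c = w * (x : R) := by
      intro x
      have h1 : e (ψ x) = m x := by simp [hψ_def]
      have h2 := congrArg Subtype.val h1
      simpa [he_def, hm_def, LinearEquiv.ofInjective_apply, LinearMap.toSpanSingleton_apply,
        smul_eq_mul] using h2
    have hψI : ∀ x : ↥(a ⊔ b), ψ x ∈ I := by
      intro x
      obtain ⟨t, htI, hct⟩ := Ideal.mem_span_singleton_mul.mp (hwx x x.2)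
      have : ψ x = t := by
        apply mul_right_cancel₀ hc
        rw [hψ x, mul_comm t c, hct]
      rw [this]; exact htI
    exact ⟨LinearMap.codRestrict I ψ hψI, fun x => by rw [mul_comm]; exact hψ x⟩
  have hua : ∀ x : R, x ∈ a ⊔ b → u * x ∈ Ideal.span {c} * a := by
    intro x hx
    have : u * x ∈ (a * J) * (a ⊔ b) := Ideal.mul_mem_mul hu hx
    have heq : (a * J) * (a ⊔ b) = Ideal.span {c} * a := by
      rw [← hIJ]; ring
    rwa [heq] at this
  have hvb : ∀ x : R, x ∈ a ⊔ b → v * x ∈ Ideal.span {c} * b := by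
    intro x hx
    have : v * x ∈ (b * J) * (a ⊔ b) := Ideal.mul_mem_mul hv hx
    have heq : (b * J) * (a ⊔ b) = Ideal.span {c} * b := by
      rw [← hIJ]; ring
    rwa [heq] at this
  obtain ⟨sa, hsa⟩ := key u a huc hua
  obtain ⟨sb, hsb⟩ := key v b hvc hvb
  set l : ↥(a ⊔ b) →ₗ[R] ↥a × ↥b := LinearMap.prod sa sb with hl_def
  have hgl : g ∘ₗ l = LinearMap.id := by
    ext x
    apply mul_left_cancel₀ hc
    show c * ((g (l x) : R)) = c * (x : R)
    rw [hgapply]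
    show c * ((sa x : R) + (sb x : R)) = c * (x : R)
    rw [mul_add, hsa, hsb, ← add_mul, huv]
  obtain ⟨eqv, -, -⟩ := hexact.splitSurjectiveEquiv hfinj ⟨l, hgl⟩
  exact ⟨eqv.trans (LinearEquiv.prodComm R _ _)⟩
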